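/- For an integer n ≥ 2, the greatest common divisor of the binomial coefficients C(n,1), C(n,2), ..., C(n,n-1) equals p if n is a power p^i of a prime p (i ≥ 1), and equals 1 otherwise. -/

import Mathlib

open Nat Finset

/-- If `q` is prime, and `q ^ (n.factorization q) < n` (i.e. `n` is not a
power of `q`), then `q` does not divide `C(n, q^(n.factorization q))` (Kummer). -/
lemma aux_not_dvd_choose {n q : ℕ} (hq : q.Prime) (hn : 0 < n)
    (hk : q ^ n.factorization q < n) : ¬ q ∣ n.choose (q ^ n.factorization q) := by
  set a := n.factorization q with ha
  set k := q ^ a with hkdef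
  have hkn : k ≤ n := hk.le
  have hq1 : 1 < q := hq.one_lt
  have hm : q ^ a * (n / q ^ a) = n := Nat.ordProj_mul_ordCompl_eq_self n q
  set m := n / q ^ a with hmdef
  have hqm : ¬ q ∣ m := Nat.not_dvd_ordCompl hq hn.ne'
  have hm1 : 1 ≤ m := by
    rcases Nat.eq_zero_or_pos m with h | h
    · rw [h, mul_zero] at hm; omega
    · exact h
  rw [← emultiplicity_eq_zero]
  rw [hq.emultiplicity_choose hkn (Nat.lt_succ_self (Nat.log q n))]
  have hempty : ((Ico 1 (Nat.log q n).succ).filter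
      fun i => q ^ i ≤ k % q ^ i + (n - k) % q ^ i) = ∅ := by
    rw [Finset.filter_eq_empty_iff]
    intro i hi
    simp only [Finset.mem_Ico] at hi
    obtain ⟨hi1, _⟩ := hi
    have hqi : 0 < q ^ i := Nat.pow_pos (by omega)
    rcases le_or_gt i a with hia | hia
    · -- `q^i` divides both `k` and `n - k`
      have h1 : q ^ i ∣ k := pow_dvd_pow q hia
      have h2 : q ^ i ∣ n := h1.trans (Nat.ordProj_dvd n q)
      have h3 : q ^ i ∣ n - k := Nat.dvd_sub h2 h1
      rw [Nat.mod_eq_zero_of_dvd h1, Nat.mod_eq_zero_of_dvd h3]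
      omega
    · -- `i > a`
      have hka : k % q ^ i = k := Nat.mod_eq_of_lt (Nat.pow_lt_pow_right hq1 hia)
      have hnk : n - k = q ^ a * (m - 1) := by
        rw [Nat.mul_sub_one]
        omega
      have hqi' : q ^ i = q ^ a * q ^ (i - a) := by
        rw [← pow_add]
        congr 1
        omega
      have hmod : (n - k) % q ^ i = q ^ a * ((m - 1) % q ^ (i - a)) := by
        rw [hnk, hqi', Nat.mul_mod_mul_left]
      rw [hka, hmod, hqi']
      have hqa : 0 < q ^ a := Nat.pow_pos (by omega)
      set t := q ^ (i - a) with htdef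
      have ht : 0 < t := Nat.pow_pos (by omega)
      have hr : (m - 1) % t < t := Nat.mod_lt _ ht
      -- suffices 1 + (m-1) % t < t
      have hne : (m - 1) % t + 1 ≠ t := by
        intro hcon
        have hdiv : t ∣ m := by
          have := Nat.div_add_mod (m - 1) t
          have hmt : m = t * ((m - 1) / t + 1) := by
            rw [Nat.mul_add, Nat.mul_one]
            omega
          exact ⟨_, hmt⟩
        have hqt : q ∣ t := dvd_pow_self q (by omega)
        exact hqm (hqt.trans hdiv)
      have h5 : k + q ^ a * ((m - 1) % t) = q ^ a * (1 + (m - 1) % t) := by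
        rw [hkdef]; ring
      rw [h5]
      exact Nat.not_le.mpr (mul_lt_mul_of_pos_left (by omega) hqa)
  rw [hempty]
  simp

/-- for `n ≥ 2`, the gcd of the binomial coefficients
`C(n,1), …, C(n,n-1)` equals `p` if `n = p^i` is a power of a prime `p`
(`i ≥ 1`), and equals `1` otherwise. -/
theorem statement6 (n : ℕ) (hn : 2 ≤ n) :
    (∀ p i : ℕ, p.Prime → 1 ≤ i → n = p ^ i →
      (Finset.Ico 1 n).gcd n.choose = p) ∧
    ((¬ ∃ p i : ℕ, p.Prime ∧ 1 ≤ i ∧ n = p ^ i) →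
      (Finset.Ico 1 n).gcd n.choose = 1) := by
  constructor
  · rintro p i hp hi rfl
    have hp1 : 1 < p := hp.one_lt
    set g := (Finset.Ico 1 (p ^ i)).gcd (p ^ i).choose with hg
    -- p divides g
    have hpg : p ∣ g := by
      apply Finset.dvd_gcd
      intro k hk
      simp only [Finset.mem_Ico] at hk
      exact hp.dvd_choose_pow (by omega) (by omega)
    -- g divides n = C(n,1)
    have hgn : g ∣ p ^ i := by
      have h1 : (1 : ℕ) ∈ Finset.Ico 1 (p ^ i) := by
        simp only [Finset.mem_Ico]
        exact ⟨le_refl _, by calc 1 < p := hp1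
                                _ ≤ p ^ i := Nat.le_self_pow (by omega) p⟩
      have := Finset.gcd_dvd (f := (p ^ i).choose) h1
      rwa [Nat.choose_one_right] at this
    obtain ⟨j, hji, hgj⟩ := (Nat.dvd_prime_pow hp).1 hgn
    -- the key element k₀ = p^(i-1)
    have hk0mem : p ^ (i - 1) ∈ Finset.Ico 1 (p ^ i) := by
      simp only [Finset.mem_Ico]
      exact ⟨Nat.one_le_pow _ _ (by omega), Nat.pow_lt_pow_right hp1 (by omega)⟩
    have hgc : g ∣ (p ^ i).choose (p ^ (i - 1)) := Finset.gcd_dvd hk0mem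
    -- emultiplicity of p in C(p^i, p^(i-1)) is 1
    have hE : emultiplicity p ((p ^ i).choose (p ^ (i - 1))) = 1 := by
      have h1 := hp.emultiplicity_choose_prime_pow_add_emultiplicity
        (n := i) (k := p ^ (i - 1)) (Nat.pow_le_pow_right (by omega) (by omega))
        ((Nat.pow_pos hp.pos).ne')
      rw [hp.emultiplicity_pow_self] at h1
      have h2 : (i : ℕ∞) = 1 + (i - 1 : ℕ) := by
        norm_cast
        omega
      rw [h2] at h1
      exact WithTop.add_right_cancel (WithTop.coe_ne_top) h1
    -- hence p^2 does not divide it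
    have hnot2 : ¬ p ^ 2 ∣ (p ^ i).choose (p ^ (i - 1)) := by
      rw [← emultiplicity_lt_iff_not_dvd, hE]
      exact_mod_cast Nat.one_lt_two
    -- j = 1
    have hj1 : j = 1 := by
      rcases Nat.lt_or_ge j 1 with h | h
      · interval_cases j
        simp only [pow_zero] at hgj
        rw [hgj] at hpg
        exact absurd (Nat.le_of_dvd one_pos hpg) (by omega)
      rcases Nat.lt_or_ge j 2 with h' | h'
      · omega
      · exfalso
        apply hnot2
        calc p ^ 2 ∣ p ^ j := pow_dvd_pow p h'
          _ = g := hgj.symm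
          _ ∣ _ := hgc
    rw [hgj, hj1, pow_one]
  · intro hne
    set g := (Finset.Ico 1 n).gcd n.choose with hg
    by_contra hg1
    -- g divides n
    have hgn : g ∣ n := by
      have h1 : (1 : ℕ) ∈ Finset.Ico 1 n := by
        simp only [Finset.mem_Ico]; omega
      have := Finset.gcd_dvd (f := n.choose) h1
      rwa [Nat.choose_one_right] at this
    obtain ⟨q, hq, hqg⟩ := Nat.exists_prime_and_dvd hg1
    have hqn : q ∣ n := hqg.trans hgn
    have ha1 : 1 ≤ n.factorization q := by
      rw [← Nat.Prime.dvd_iff_one_le_factorization hq (by omega)]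
      exact hqn
    have hkn : q ^ n.factorization q ≤ n := Nat.le_of_dvd (by omega) (Nat.ordProj_dvd n q)
    have hklt : q ^ n.factorization q < n := by
      rcases Nat.lt_or_ge (q ^ n.factorization q) n with h | h
      · exact h
      · exfalso
        exact hne ⟨q, n.factorization q, hq, ha1, by omega⟩
    have hnotdvd := aux_not_dvd_choose hq (by omega) hklt
    apply hnotdvd
    refine hqg.trans (Finset.gcd_dvd ?_)
    simp only [Finset.mem_Ico]
    constructor
    · exact Nat.one_le_pow _ _ hq.pos
    · exact hklt
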